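/- Let G be a directed graph with root r (no incoming edges at r) and let 𝒢 be the path-suffix tree of G with edge {p, p+e} assigned cost c_e. Then for every subgraph H of G that is an out-arborescence rooted at r, there is a subtree of 𝒢 containing the root (r) whose total cost equals the total cost of H, and which contains, for each vertex v of H, a vertex of 𝒢 corresponding to the unique r→v path in H. -/

import Mathlib

open scoped Classical

/-- The list of directed edges traversed by a list of vertices. -/
def pathEdges {V : Type*} (p : List V) : List (V × V) := p.zip p.tail

/-- `p` is a simple directed path in the edge set `E` starting at `s`. -/
def IsRPath {V : Type*} (E : Finset (V × V)) (s : V) (p : List V) : Prop :=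
  p.Nodup ∧ p.Chain' (fun u v => (u, v) ∈ E) ∧ p.head? = some s

/-- `p` is a simple directed path in `E` from `s` to `t`. -/
def IsRPathTo {V : Type*} (E : Finset (V × V)) (s t : V) (p : List V) : Prop :=
  IsRPath E s p ∧ p.getLast? = some t

/-- `E` contains `k` pairwise edge-disjoint directed `s`→`t` paths. -/
def HasKPaths {V : Type*} (E : Finset (V × V)) (s t : V) (k : ℕ) : Prop :=
  ∃ P : Fin k → List V, (∀ i, IsRPathTo E s t (P i)) ∧
    ∀ i j, i ≠ j → ∀ e, e ∈ pathEdges (P i) → e ∉ pathEdges (P j)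

/-- In-degree of a vertex `v` in the edge set `E`. -/
def inDeg {V : Type*} [DecidableEq V] (E : Finset (V × V)) (v : V) : ℕ :=
  (E.filter (fun e => e.2 = v)).card

/-- In-degree of a vertex set `S`: number of edges entering `S` from outside. -/
def inDegS {V : Type*} [DecidableEq V] (E : Finset (V × V)) (S : Finset V) : ℕ :=
  (E.filter (fun e => e.1 ∉ S ∧ e.2 ∈ S)).card

/-- The maximum number of pairwise edge-disjoint `s→v` paths in `E`. -/
noncomputable def maxConn {V : Type*} (E : Finset (V × V)) (s v : V) : ℕ :=
  sSup {m : ℕ | HasKPaths E s v m}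

/-- The cost of the last edge of a vertex list (0 for lists with at most one vertex). -/
def lastEdgeCost {V : Type*} (c : V × V → ℝ) (p : List V) : ℝ :=
  ((pathEdges p).getLast?.map c).getD 0

/-- `v` is a vertex of the edge set `H`. -/
def InVerts {V : Type*} (H : Finset (V × V)) (v : V) : Prop :=
  ∃ e ∈ H, e.1 = v ∨ e.2 = v


section ArbHelpers
variable {V : Type*}

lemma pathEdges_append_singleton (p : List V) (x : V) (h : p ≠ []) :
    pathEdges (p ++ [x]) = pathEdges p ++ [(p.getLast h, x)] := by
  induction p with
  | nil => simp at h
  | cons a l ih =>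
    cases l with
    | nil => simp [pathEdges]
    | cons b l' =>
      have := ih (by simp)
      simp only [pathEdges, List.cons_append, List.zip_cons_cons, List.tail_cons] at this ⊢
      rw [this]
      simp [List.getLast_cons]

lemma mem_pathEdges_rel {R : V → V → Prop} {p : List V} (hc : p.Chain' R)
    {e : V × V} (he : e ∈ pathEdges p) : R e.1 e.2 := by
  induction p with
  | nil => simp [pathEdges] at he
  | cons a l ih =>
    cases l with
    | nil => simp [pathEdges] at he
    | cons b l' =>
      rw [List.Chain', List.isChain_cons_cons] at hc
      simp only [pathEdges, List.zip_cons_cons, List.tail_cons, List.mem_cons] at he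
      rcases he with rfl | he
      · exact hc.1
      · exact ih hc.2 he

lemma fst_mem_dropLast {p : List V} {a b : V} (h : (a, b) ∈ pathEdges p) :
    a ∈ p.dropLast := by
  induction p with
  | nil => simp [pathEdges] at h
  | cons x l ih =>
    cases l with
    | nil => simp [pathEdges] at h
    | cons y l' =>
      simp only [pathEdges, List.zip_cons_cons, List.tail_cons, List.mem_cons] at h
      rcases h with h | h
      · simp [Prod.ext_iff] at h
        simp [h.1]
      · have := ih h
        simp only [List.dropLast_cons_of_ne_nil (l := y :: l') (by simp)]
        exact List.mem_cons_of_mem _ this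

lemma exists_edge_of_mem {p : List V} {s v : V} (hh : p.head? = some s)
    (hv : v ∈ p) (hne : v ≠ s) : ∃ w, (w, v) ∈ pathEdges p := by
  induction p generalizing s with
  | nil => simp at hv
  | cons a l ih =>
    simp at hh; subst hh
    rcases List.mem_cons.mp hv with rfl | hv
    · exact absurd rfl hne
    cases l with
    | nil => simp at hv
    | cons b l' =>
      by_cases hvb : v = b
      · subst hvb
        exact ⟨a, by simp [pathEdges]⟩
      · obtain ⟨w, hw⟩ := ih (s := b) rfl hv hvb
        exact ⟨w, by simp [pathEdges]; right; exact hw⟩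

lemma isRPathTo_extend {H : Finset (V × V)} {r u v : V} {p : List V}
    (hp : IsRPathTo H r u p) (he : (u, v) ∈ H) (hv : v ∉ p) :
    IsRPathTo H r v (p ++ [v]) := by
  obtain ⟨⟨hnd, hch, hhd⟩, hlast⟩ := hp
  have hpne : p ≠ [] := by rintro rfl; simp at hlast
  refine ⟨⟨?_, ?_, ?_⟩, ?_⟩
  · rw [List.nodup_append]
    exact ⟨hnd, List.nodup_singleton _, by
      intro a ha b hb h2
      simp at hb; subst hb; exact hv (h2 ▸ ha)⟩
  · rw [List.Chain', List.isChain_append]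
    refine ⟨hch, List.isChain_singleton _, ?_⟩
    intro x hx y hy
    simp at hy; subst hy
    rw [List.getLast?_eq_getLast hpne] at hx hlast
    simp at hx hlast
    rw [← hx, hlast]; exact he
  · rw [List.head?_append_of_ne_nil _ hpne]; exact hhd
  · simp

lemma isRPathTo_of_append {H : Finset (V × V)} {r t : V} {q : List V}
    (hq : q ≠ []) (h : IsRPathTo H r t (q ++ [t])) :
    IsRPathTo H r (q.getLast hq) q ∧ (q.getLast hq, t) ∈ H := by
  obtain ⟨⟨hnd, hch, hhd⟩, _⟩ := h
  rw [List.Chain', List.isChain_append] at hch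
  have hedge : (q.getLast hq, t) ∈ H := by
    apply hch.2.2
    · rw [List.getLast?_eq_getLast hq]; rfl
    · simp
  refine ⟨⟨⟨(List.nodup_append.mp hnd).1, hch.1, ?_⟩, ?_⟩, hedge⟩
  · rwa [List.head?_append_of_ne_nil _ hq] at hhd
  · rw [List.getLast?_eq_getLast hq]

lemma path_to_root {H : Finset (V × V)} {r : V} {p : List V}
    (hp : IsRPathTo H r r p) : p = [r] := by
  obtain ⟨⟨hnd, _, hhd⟩, hlast⟩ := hp
  cases p with
  | nil => simp at hhd
  | cons a l =>
    have ha : a = r := by simpa using hhd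
    cases l with
    | nil => rw [ha]
    | cons b l' =>
      exfalso
      have hlast' : (a :: b :: l').getLast (by simp) = r := by
        rwa [List.getLast?_eq_getLast (by simp), Option.some_inj] at hlast
      have hmem : r ∈ b :: l' := by
        rw [← hlast', List.getLast_cons (by simp)]
        exact List.getLast_mem _
      rw [List.nodup_cons] at hnd
      exact hnd.1 (ha ▸ hmem)

lemma path_decomp {H : Finset (V × V)} {r t : V} {p : List V}
    (hp : IsRPathTo H r t p) (ht : t ≠ r) :
    ∃ q, q ≠ [] ∧ p = q ++ [t] := by
  obtain ⟨⟨hnd, hch, hhd⟩, hlast⟩ := hp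
  have hpne : p ≠ [] := by rintro rfl; simp at hhd
  have hdecomp : p = p.dropLast ++ [p.getLast hpne] := (List.dropLast_append_getLast hpne).symm
  rw [List.getLast?_eq_getLast hpne] at hlast
  simp at hlast
  refine ⟨p.dropLast, ?_, by rw [← hlast]; exact hdecomp⟩
  intro hdl
  rw [hdl, List.nil_append, hlast] at hdecomp
  rw [hdecomp] at hhd
  simp at hhd
  exact ht hhd

lemma pred_unique [DecidableEq V] {H : Finset (V × V)} {t w w' : V}
    (hcard : (H.filter (fun e => e.2 = t)).card = 1)
    (h1 : (w, t) ∈ H) (h2 : (w', t) ∈ H) : w = w' := by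
  obtain ⟨a, ha⟩ := Finset.card_eq_one.mp hcard
  have m1 : (w, t) ∈ H.filter (fun e => e.2 = t) := by simp [h1]
  have m2 : (w', t) ∈ H.filter (fun e => e.2 = t) := by simp [h2]
  rw [ha] at m1 m2
  simp at m1 m2
  exact congrArg Prod.fst (m1.trans m2.symm)

lemma path_unique [DecidableEq V] {H : Finset (V × V)} {r : V}
    (hindeg : ∀ v, v ≠ r → InVerts H v → (H.filter (fun e => e.2 = v)).card = 1) :
    ∀ n t p q, p.length ≤ n → IsRPathTo H r t p → IsRPathTo H r t q → p = q := by
  intro n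
  induction n with
  | zero =>
    intro t p q hlen hp _
    exfalso
    have : p = [] := List.length_eq_zero_iff.mp (Nat.le_zero.mp hlen)
    subst this; simp [IsRPathTo, IsRPath] at hp
  | succ n ih =>
    intro t p q hlen hp hq
    by_cases ht : t = r
    · subst ht; rw [path_to_root hp, path_to_root hq]
    · obtain ⟨p', hp'ne, rfl⟩ := path_decomp hp ht
      obtain ⟨q', hq'ne, rfl⟩ := path_decomp hq ht
      obtain ⟨hp'path, hp'edge⟩ := isRPathTo_of_append hp'ne hp
      obtain ⟨hq'path, hq'edge⟩ := isRPathTo_of_append hq'ne hq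
      have hvert : InVerts H t := ⟨(p'.getLast hp'ne, t), hp'edge, Or.inr rfl⟩
      have hww : p'.getLast hp'ne = q'.getLast hq'ne :=
        pred_unique (hindeg t ht hvert) hp'edge hq'edge
      have : p' = q' := by
        apply ih (p'.getLast hp'ne) p' q' ?_ hp'path (hww ▸ hq'path)
        have hl : (p' ++ [t]).length = p'.length + 1 := by simp
        omega
      rw [this]

end ArbHelpers

/-- For every out-arborescence `H ⊆ G` rooted at `r`, there is a subtree of the
path-suffix tree of `G` (a prefix-closed set `S` of rooted paths containing the
trivial path `[r]`) whose total cost (each non-trivial path contributing the cost of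
its last edge) equals the cost of `H`, and which contains, for every vertex `v` of
`H`, the `r→v` path of `H`. -/
theorem arborescence_embeds_in_suffixTree
    {V : Type*} [Fintype V] [DecidableEq V]
    (E H : Finset (V × V)) (hHE : H ⊆ E) (c : V × V → ℝ) (hc : ∀ e, 0 ≤ c e)
    (r : V) (hr : ∀ u, (u, r) ∉ E)
    (hindeg : ∀ v, v ≠ r → InVerts H v → inDeg H v = 1)
    (hreach : ∀ v, InVerts H v → ∃ p, IsRPathTo H r v p) :
    ∃ S : Finset (List V),
      (∀ p ∈ S, IsRPath E r p) ∧
      [r] ∈ S ∧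
      (∀ (p : List V) (x : V), p ≠ [] → p ++ [x] ∈ S → p ∈ S) ∧
      (∑ p ∈ S, lastEdgeCost c p) = ∑ e ∈ H, c e ∧
      (∀ v, InVerts H v → ∃ p ∈ S, IsRPathTo H r v p) := by
  classical
  have hrH : ∀ u, (u, r) ∉ H := fun u hu => hr u (hHE hu)
  have hindeg' : ∀ v, v ≠ r → InVerts H v → (H.filter (fun e => e.2 = v)).card = 1 :=
    hindeg
  have uniq : ∀ t p q, IsRPathTo H r t p → IsRPathTo H r t q → p = q :=
    fun t p q hp hq => path_unique hindeg' p.length t p q le_rfl hp hq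
  set P : V → List V := fun v => if h : ∃ p, IsRPathTo H r v p then h.choose else [] with hPdef
  have hP : ∀ v, InVerts H v → IsRPathTo H r v (P v) := by
    intro v hv
    have h := hreach v hv
    simp only [hPdef, dif_pos h]
    exact h.choose_spec
  have hPne : ∀ v, InVerts H v → P v ≠ [] := by
    intro v hv h
    have := (hP v hv).2
    rw [h] at this; simp at this
  have hnotmem : ∀ u v, (u, v) ∈ H → v ∉ P u := by
    intro u v he hv
    have hu : InVerts H u := ⟨(u, v), he, Or.inl rfl⟩
    obtain ⟨⟨hnd, hch, hhd⟩, hlast⟩ := hP u hu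
    have hvr : v ≠ r := fun h => hrH u (h ▸ he)
    obtain ⟨w, hw⟩ := exists_edge_of_mem hhd hv hvr
    have hwH : (w, v) ∈ H := mem_pathEdges_rel hch hw
    have hvvert : InVerts H v := ⟨(u, v), he, Or.inr rfl⟩
    have hwu : w = u := pred_unique (hindeg' v hvr hvvert) hwH he
    subst hwu
    have hdrop : w ∈ (P w).dropLast := fst_mem_dropLast hw
    have hne := hPne w hu
    have hlast' : (P w).getLast hne = w := by
      rwa [List.getLast?_eq_getLast hne, Option.some_inj] at hlast
    have hsplit : (P w).dropLast ++ [(P w).getLast hne] = P w :=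
      List.dropLast_append_getLast hne
    rw [← hsplit] at hnd
    have hdisj := (List.nodup_append.mp hnd).2.2
    exact hdisj _ hdrop _ (List.mem_singleton_self _) hlast'.symm
  set f : V × V → List V := fun e => P e.1 ++ [e.2] with hfdef
  have hfpath : ∀ e ∈ H, IsRPathTo H r e.2 (f e) := by
    rintro ⟨u, v⟩ he
    exact isRPathTo_extend (hP u ⟨(u, v), he, Or.inl rfl⟩) he (hnotmem u v he)
  have hrpath : IsRPathTo H r r [r] :=
    ⟨⟨List.nodup_singleton r, List.isChain_singleton r, rfl⟩, rfl⟩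
  have memS : ∀ v p, IsRPathTo H r v p → p ∈ insert [r] (H.image f) := by
    intro v p hp
    by_cases hv : v = r
    · subst hv; rw [path_to_root hp]; exact Finset.mem_insert_self _ _
    · obtain ⟨q, hqne, rfl⟩ := path_decomp hp hv
      obtain ⟨hqpath, hqedge⟩ := isRPathTo_of_append hqne hp
      have hw : InVerts H (q.getLast hqne) := ⟨(q.getLast hqne, v), hqedge, Or.inl rfl⟩
      have hPq : P (q.getLast hqne) = q := uniq _ _ _ (hP _ hw) hqpath
      apply Finset.mem_insert_of_mem
      exact Finset.mem_image.mpr ⟨(q.getLast hqne, v), hqedge, by simp [hfdef, hPq]⟩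
  refine ⟨insert [r] (H.image f), ?_, memS r [r] hrpath, ?_, ?_, ?_⟩
  · intro p hp
    rcases Finset.mem_insert.mp hp with rfl | hp
    · exact ⟨List.nodup_singleton r, List.isChain_singleton r, rfl⟩
    · obtain ⟨e, he, rfl⟩ := Finset.mem_image.mp hp
      obtain ⟨⟨hnd, hch, hhd⟩, _⟩ := hfpath e he
      exact ⟨hnd, hch.imp (fun a b hab => hHE hab), hhd⟩
  · intro p x hpne hmem
    rcases Finset.mem_insert.mp hmem with h | h
    · exfalso
      have := congrArg List.length h
      simp at this
      cases p with
      | nil => exact hpne rfl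
      | cons a l => simp at this
    · obtain ⟨⟨u, v⟩, he, heq⟩ := Finset.mem_image.mp h
      obtain ⟨h1, h2⟩ := List.append_inj' heq (by simp)
      exact memS u p (h1 ▸ hP u ⟨(u, v), he, Or.inl rfl⟩)
  · have hnotin : [r] ∉ H.image f := by
      intro h
      obtain ⟨e, he, heq⟩ := Finset.mem_image.mp h
      have := congrArg List.length heq
      simp [hfdef] at this
      exact hPne e.1 ⟨e, he, Or.inl rfl⟩ this
    rw [Finset.sum_insert hnotin]
    have h0 : lastEdgeCost c [r] = 0 := rfl
    rw [h0, zero_add, Finset.sum_image ?_]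
    · apply Finset.sum_congr rfl
      intro e he
      have hune := hPne e.1 ⟨e, he, Or.inl rfl⟩
      have hlast : (P e.1).getLast hune = e.1 := by
        have := (hP e.1 ⟨e, he, Or.inl rfl⟩).2
        rwa [List.getLast?_eq_getLast hune, Option.some_inj] at this
      show lastEdgeCost c (P e.1 ++ [e.2]) = c e
      rw [lastEdgeCost, pathEdges_append_singleton _ _ hune, hlast]
      simp
    · intro a ha b hb hab
      obtain ⟨h1, h2⟩ := List.append_inj' hab (by simp)
      simp at h2
      have ha2 := (hP a.1 ⟨a, ha, Or.inl rfl⟩).2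
      have hb2 := (hP b.1 ⟨b, hb, Or.inl rfl⟩).2
      rw [h1, hb2] at ha2
      simp at ha2
      exact Prod.ext ha2.symm h2
  · intro v hv
    exact ⟨P v, memS v (P v) (hP v hv), hP v hv⟩
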